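/- arXiv:2010.12856 — 3 statements merged into one kernel-verified Lean document; each statement's English description precedes it below -/
import Mathlib

section
/- There exist 3×3 positive definite matrices A₁, A₂, B₁, B₂ such that ((A₁+B₁)² + (A₂+B₂)²)^{1/2} is not ≤ (A₁² + A₂²)^{1/2} + (B₁² + B₂²)^{1/2} in the Loewner order. -/
open scoped ComplexOrder Kronecker

/-- Matrix power via the continuous functional calculus. -/
noncomputable def mpow {n : Type*} [Fintype n] [DecidableEq n]
    (A : Matrix n n ℂ) (p : ℝ) : Matrix n n ℂ :=
  cfc (fun x : ℝ => x ^ p) A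

/-- The Loewner order on matrices. -/
def LoewnerLE {n : Type*} [Fintype n] (A B : Matrix n n ℂ) : Prop :=
  (B - A).PosSemidef

/-- The matrix geometric mean `A # B = A^{1/2}(A^{-1/2} B A^{-1/2})^{1/2} A^{1/2}`. -/
noncomputable def geo {n : Type*} [Fintype n] [DecidableEq n]
    (A B : Matrix n n ℂ) : Matrix n n ℂ :=
  mpow A (1/2) * mpow (mpow A (-(1/2)) * B * mpow A (-(1/2))) (1/2) * mpow A (1/2)

/-- The generalized Kantorovich constant. -/
noncomputable def Kconst (h p : ℝ) : ℝ :=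
  ((h ^ p - h) / ((p - 1) * (h - 1))) *
    (((p - 1) / p) * ((h ^ p - 1) / (h ^ p - h))) ^ p

/-- The Specht ratio. -/
noncomputable def Specht (h : ℝ) : ℝ :=
  if h = 1 then 1 else (h - 1) * h ^ (1 / (h - 1)) / (Real.exp 1 * Real.log h)

/-! ### Auxiliary lemmas -/

open Matrix

section sqrtPort
open scoped MatrixOrder

noncomputable def Matrix.PosSemidef.sqrt {n : Type*} [Fintype n] [DecidableEq n]
    {A : Matrix n n ℂ} (_hA : A.PosSemidef) : Matrix n n ℂ := CFC.sqrt A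

lemma Matrix.PosSemidef.posSemidef_sqrt {n : Type*} [Fintype n] [DecidableEq n]
    {A : Matrix n n ℂ} (hA : A.PosSemidef) : hA.sqrt.PosSemidef :=
  (CFC.sqrt_nonneg A).posSemidef

lemma Matrix.PosSemidef.sqrt_mul_self {n : Type*} [Fintype n] [DecidableEq n]
    {A : Matrix n n ℂ} (hA : A.PosSemidef) : hA.sqrt * hA.sqrt = A :=
  CFC.sqrt_mul_sqrt_self A hA.nonneg

lemma Matrix.PosSemidef.sqrt_sq {n : Type*} [Fintype n] [DecidableEq n]
    {A : Matrix n n ℂ} (hA : A.PosSemidef) : (hA.pow 2).sqrt = A :=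
  CFC.sqrt_sq A hA.nonneg

lemma Matrix.PosSemidef.sqrt_eq_cfc {n : Type*} [Fintype n] [DecidableEq n]
    {A : Matrix n n ℂ} (hA : A.PosSemidef) : hA.sqrt = cfc Real.sqrt A := by
  rw [Matrix.PosSemidef.sqrt, CFC.sqrt_eq_real_sqrt A hA.nonneg, cfcₙ_eq_cfc]

end sqrtPort

/-- `mpow X (1/2)` agrees with the positive semidefinite square root. -/
private lemma mpow_half_eq_sqrt {X : Matrix (Fin 3) (Fin 3) ℂ} (hX : X.PosSemidef) :
    mpow X (1/2) = hX.sqrt := by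
  have h1 : mpow X (1/2) = cfc Real.sqrt X := by
    unfold mpow
    exact cfc_congr (fun x _ => (Real.sqrt_eq_rpow x).symm)
  rw [h1, hX.sqrt_eq_cfc]

/-- Operator monotonicity of the matrix square root. -/
private lemma sqrt_mono {n : Type*} [Fintype n] [DecidableEq n] {A B : Matrix n n ℂ}
    (hA : A.PosSemidef) (hB : B.PosSemidef) (hAB : (B - A).PosSemidef) :
    (hB.sqrt - hA.sqrt).PosSemidef := by
  set X := hA.sqrt with hXdef
  set Y := hB.sqrt with hYdef
  have hX : X.PosSemidef := hA.posSemidef_sqrt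
  have hY : Y.PosSemidef := hB.posSemidef_sqrt
  have hT : (Y - X).IsHermitian := hY.1.sub hX.1
  refine hT.posSemidef_iff_eigenvalues_nonneg.mpr fun i => ?_
  by_contra hneg
  push_neg at hneg
  set μ := hT.eigenvalues i with hμdef
  set v : (n → ℂ) := ⇑(hT.eigenvectorBasis i) with hvdef
  have hv : (Y - X) *ᵥ v = μ • v := hT.mulVec_eigenvectorBasis i
  have hvne : v ≠ 0 := by
    have h0 := hT.eigenvectorBasis.orthonormal.ne_zero i
    intro hc
    apply h0
    ext j
    exact congrFun hc j
  -- the key algebraic identity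
  have hYY : Y * Y = B := hB.sqrt_mul_self
  have hXX : X * X = A := hA.sqrt_mul_self
  have h2 : (B - A) + (B - A) = (Y - X) * (Y + X) + (Y + X) * (Y - X) := by
    rw [← hYY, ← hXX]; noncomm_ring
  set w : (n → ℂ) := (Y + X) *ᵥ v with hwdef
  set q : ℂ := star v ⬝ᵥ w with hqdef
  have hsv : star ((Y - X) *ᵥ v) = (star v) ᵥ* (Y - X) := by
    rw [Matrix.star_mulVec, hT.eq]
  have t1 : star v ⬝ᵥ (((Y - X) * (Y + X)) *ᵥ v) = (μ : ℂ) * q := by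
    rw [← Matrix.mulVec_mulVec, Matrix.dotProduct_mulVec, ← hsv, hv]
    rw [star_smul, star_trivial, smul_dotProduct]
    simp [hqdef, hwdef, Matrix.dotProduct_mulVec, Complex.real_smul]
  have t2 : star v ⬝ᵥ (((Y + X) * (Y - X)) *ᵥ v) = (μ : ℂ) * q := by
    rw [← Matrix.mulVec_mulVec, hv, Matrix.mulVec_smul, dotProduct_smul]
    simp [hqdef, hwdef, Complex.real_smul]
  have hc2 : (star v ⬝ᵥ ((B - A) *ᵥ v)) + (star v ⬝ᵥ ((B - A) *ᵥ v))
      = (μ : ℂ) * q + (μ : ℂ) * q := by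
    conv_lhs => rw [← dotProduct_add, ← Matrix.add_mulVec, h2]
    rw [Matrix.add_mulVec, dotProduct_add, t1, t2]
  have hcq : star v ⬝ᵥ ((B - A) *ᵥ v) = (μ : ℂ) * q := by
    have := hc2
    ring_nf at this ⊢
    linear_combination this / 2
  have hle0 : (0 : ℂ) ≤ (μ : ℂ) * q := hcq ▸ hAB.dotProduct_mulVec_nonneg v
  have hqY : (0 : ℂ) ≤ star v ⬝ᵥ (Y *ᵥ v) := hY.dotProduct_mulVec_nonneg v
  have hqX : (0 : ℂ) ≤ star v ⬝ᵥ (X *ᵥ v) := hX.dotProduct_mulVec_nonneg v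
  have hqsplit : q = star v ⬝ᵥ (Y *ᵥ v) + star v ⬝ᵥ (X *ᵥ v) := by
    rw [hqdef, hwdef, Matrix.add_mulVec, dotProduct_add]
  have hq0 : (0 : ℂ) ≤ q := hqsplit ▸ add_nonneg hqY hqX
  -- from μ < 0 and 0 ≤ μ q and 0 ≤ q we get q = 0
  have hqre : q.im = 0 ∧ 0 ≤ q.re := by
    rw [Complex.le_def] at hq0
    exact ⟨hq0.2.symm ▸ by simpa using hq0.2.symm, by simpa using hq0.1⟩
  have hq_eq_0 : q = 0 := by
    rw [Complex.le_def] at hle0 hq0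
    simp only [Complex.zero_re, Complex.zero_im] at hle0 hq0
    have him : q.im = 0 := hq0.2.symm
    have hre : 0 ≤ q.re := hq0.1
    have : ((μ : ℂ) * q).re = μ * q.re := by
      simp [Complex.mul_re, him]
    rw [this] at hle0
    have : q.re = 0 := le_antisymm (by nlinarith [hle0.1, show μ < 0 from hneg]) hre
    exact Complex.ext (by simpa using this) (by simpa using him)
  have hY0 : star v ⬝ᵥ (Y *ᵥ v) = 0 := by
    have h1 : star v ⬝ᵥ (Y *ᵥ v) ≤ 0 := by
      have := hqsplit ▸ hq_eq_0
      calc star v ⬝ᵥ (Y *ᵥ v) ≤ star v ⬝ᵥ (Y *ᵥ v) + star v ⬝ᵥ (X *ᵥ v) :=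
            le_add_of_nonneg_right hqX
        _ = 0 := this.symm ▸ rfl
    exact le_antisymm h1 hqY
  have hX0 : star v ⬝ᵥ (X *ᵥ v) = 0 := by
    have := hqsplit ▸ hq_eq_0
    have h1 : star v ⬝ᵥ (X *ᵥ v) ≤ 0 := by
      calc star v ⬝ᵥ (X *ᵥ v) ≤ star v ⬝ᵥ (Y *ᵥ v) + star v ⬝ᵥ (X *ᵥ v) :=
            le_add_of_nonneg_left hqY
        _ = 0 := this.symm ▸ rfl
    exact le_antisymm h1 hqX
  have hYv : Y *ᵥ v = 0 := (hY.dotProduct_mulVec_zero_iff v).mp hY0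
  have hXv : X *ᵥ v = 0 := (hX.dotProduct_mulVec_zero_iff v).mp hX0
  have : μ • v = 0 := by
    rw [← hv, Matrix.sub_mulVec, hYv, hXv, sub_zero]
  rcases smul_eq_zero.mp this with h | h
  · exact absurd h (ne_of_lt hneg)
  · exact hvne h

/-- Positive semidefiniteness via an LDL certificate. -/
private lemma psd_of_ldl {X B : Matrix (Fin 3) (Fin 3) ℂ} {d : Fin 3 → ℝ}
    (hd : ∀ i, 0 ≤ d i) (h : X = B.conjTranspose * Matrix.diagonal (fun i => (d i : ℂ)) * B) :
    X.PosSemidef := by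
  rw [h]
  refine (Matrix.PosSemidef.diagonal fun i => ?_).conjTranspose_mul_mul_same B
  simp only [Pi.zero_apply]
  exact_mod_cast hd i

/-- Positive definiteness via a shift certificate. -/
private lemma posdef_of_shift {X Y : Matrix (Fin 3) (Fin 3) ℂ} {c : ℝ}
    (hc : 0 < c) (hY : Y.PosSemidef) (h : X = Matrix.diagonal (fun _ => (c : ℂ)) + Y) :
    X.PosDef := by
  rw [h]
  exact (Matrix.PosDef.diagonal fun _ => by exact_mod_cast hc).add_posSemidef hY


private lemma posdef_cert {X B : Matrix (Fin 3) (Fin 3) ℂ} {c : ℝ} {d : Fin 3 → ℝ}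
    (hc : 0 < c) (hd : ∀ i, 0 ≤ d i)
    (h : X = Matrix.diagonal (fun _ => (c : ℂ)) +
      B.conjTranspose * Matrix.diagonal (fun i => (d i : ℂ)) * B) :
    X.PosDef :=
  posdef_of_shift hc (psd_of_ldl hd rfl) h

noncomputable def mA1 : Matrix (Fin 3) (Fin 3) ℂ := !![((3 : ℝ) : ℂ), ((-1 : ℝ) : ℂ), ((0 : ℝ) : ℂ); ((-1 : ℝ) : ℂ), ((1 : ℝ) : ℂ), ((0 : ℝ) : ℂ); ((0 : ℝ) : ℂ), ((0 : ℝ) : ℂ), ((1 : ℝ) : ℂ)]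
noncomputable def mA2 : Matrix (Fin 3) (Fin 3) ℂ := !![((11/10 : ℝ) : ℂ), ((1 : ℝ) : ℂ), ((0 : ℝ) : ℂ); ((1 : ℝ) : ℂ), ((11/10 : ℝ) : ℂ), ((0 : ℝ) : ℂ); ((0 : ℝ) : ℂ), ((0 : ℝ) : ℂ), ((11/10 : ℝ) : ℂ)]
noncomputable def mB1 : Matrix (Fin 3) (Fin 3) ℂ := !![((11/10 : ℝ) : ℂ), ((0 : ℝ) : ℂ), ((0 : ℝ) : ℂ); ((0 : ℝ) : ℂ), ((11/10 : ℝ) : ℂ), ((-1 : ℝ) : ℂ); ((0 : ℝ) : ℂ), ((-1 : ℝ) : ℂ), ((11/10 : ℝ) : ℂ)]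
noncomputable def mB2 : Matrix (Fin 3) (Fin 3) ℂ := !![((1 : ℝ) : ℂ), ((0 : ℝ) : ℂ), ((0 : ℝ) : ℂ); ((0 : ℝ) : ℂ), ((1 : ℝ) : ℂ), ((1 : ℝ) : ℂ); ((0 : ℝ) : ℂ), ((1 : ℝ) : ℂ), ((2 : ℝ) : ℂ)]
noncomputable def mCP : Matrix (Fin 3) (Fin 3) ℂ := !![((1741/500 : ℝ) : ℂ), ((-327/1000 : ℝ) : ℂ), ((0 : ℝ) : ℂ); ((-327/1000 : ℝ) : ℂ), ((2029/1000 : ℝ) : ℂ), ((0 : ℝ) : ℂ); ((0 : ℝ) : ℂ), ((0 : ℝ) : ℂ), ((149/100 : ℝ) : ℂ)]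
noncomputable def mCQ : Matrix (Fin 3) (Fin 3) ℂ := !![((149/100 : ℝ) : ℂ), ((0 : ℝ) : ℂ), ((0 : ℝ) : ℂ); ((0 : ℝ) : ℂ), ((256/125 : ℝ) : ℂ), ((169/1000 : ℝ) : ℂ); ((0 : ℝ) : ℂ), ((169/1000 : ℝ) : ℂ), ((2683/1000 : ℝ) : ℂ)]
noncomputable def mD : Matrix (Fin 3) (Fin 3) ℂ := !![((1201/250 : ℝ) : ℂ), ((-243/1000 : ℝ) : ℂ), ((231/1000 : ℝ) : ℂ); ((-243/1000 : ℝ) : ℂ), ((3567/1000 : ℝ) : ℂ), ((7/50 : ℝ) : ℂ); ((231/1000 : ℝ) : ℂ), ((7/50 : ℝ) : ℂ), ((399/100 : ℝ) : ℂ)]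

set_option maxHeartbeats 4000000 in
theorem minkowski_operator_ineq_fails :
    ∃ A₁ A₂ B₁ B₂ : Matrix (Fin 3) (Fin 3) ℂ,
      A₁.PosDef ∧ A₂.PosDef ∧ B₁.PosDef ∧ B₂.PosDef ∧
      ¬ LoewnerLE
        (mpow ((A₁ + B₁) ^ 2 + (A₂ + B₂) ^ 2) (1/2))
        (mpow (A₁ ^ 2 + A₂ ^ 2) (1/2) + mpow (B₁ ^ 2 + B₂ ^ 2) (1/2)) := by
  classical
  have hA1 : mA1.PosDef := posdef_cert (B := !![((1 : ℝ) : ℂ), ((-2/5 : ℝ) : ℂ), ((0 : ℝ) : ℂ); ((0 : ℝ) : ℂ), ((1 : ℝ) : ℂ), ((0 : ℝ) : ℂ); ((0 : ℝ) : ℂ), ((0 : ℝ) : ℂ), ((1 : ℝ) : ℂ)]) (c := (1/2 : ℝ)) (d := ![(5/2 : ℝ), (1/10 : ℝ), (1/2 : ℝ)]) (by norm_num) (by intro i; fin_cases i <;> norm_num) (by ext i j; fin_cases i <;> fin_cases j <;> norm_num [mA1, mA2, mB1, mB2, mCP, mCQ, mD, Matrix.mul_apply, Matrix.conjTranspose_apply,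 Matrix.diagonal_apply, Fin.sum_univ_three, pow_two, Matrix.cons_val_two, Matrix.vecHead, Matrix.vecTail, map_ofNat, map_div₀, map_neg, Fin.ext_iff, Complex.ext_iff])
  have hA2 : mA2.PosDef := posdef_cert (B := !![((1 : ℝ) : ℂ), ((20/21 : ℝ) : ℂ), ((0 : ℝ) : ℂ); ((0 : ℝ) : ℂ), ((1 : ℝ) : ℂ), ((0 : ℝ) : ℂ); ((0 : ℝ) : ℂ), ((0 : ℝ) : ℂ), ((1 : ℝ) : ℂ)]) (c := (1/20 : ℝ)) (d := ![(21/20 : ℝ), (41/420 : ℝ), (21/20 : ℝ)]) (by norm_num) (by intro i; fin_cases i <;> norm_num) (by ext i j; fin_cases i <;> fin_cases j <;> norm_num [mA1, mA2, mB1, mB2, mCP, mCQ, mD, Matrix.mul_apply, Matrix.conjTranspose_apply, Matrix.diagonal_apply, Fin.sum_univ_three, pow_two, Matrix.cons_val_two, Matrix.vecHead, Matrix.vecTail, map_ofNat, map_div₀, map_neg, Fin.ext_iff, Complex.ext_iff])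
  have hB1 : mB1.PosDef := posdef_cert (B := !![((1 : ℝ) : ℂ), ((0 : ℝ) : ℂ), ((0 : ℝ) : ℂ); ((0 : ℝ) : ℂ), ((1 : ℝ) : ℂ), ((-20/21 : ℝ) : ℂ); ((0 : ℝ) : ℂ), ((0 : ℝ) : ℂ), ((1 : ℝ) : ℂ)]) (c := (1/20 : ℝ)) (d := ![(21/20 : ℝ), (21/20 : ℝ), (41/420 : ℝ)]) (by norm_num) (by intro i; fin_cases i <;> norm_num) (by ext i j; fin_cases i <;> fin_cases j <;> norm_num [mA1, mA2, mB1, mB2, mCP, mCQ, mD, Matrix.mul_apply, Matrix.conjTranspose_apply, Matrix.diagonal_apply, Fin.sum_univ_three, pow_two, Matrix.cons_val_two, Matrix.vecHead, Matrix.vecTail, map_ofNat, map_div₀, map_neg, Fin.ext_iff, Complex.ext_iff])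
  have hB2 : mB2.PosDef := posdef_cert (B := !![((1 : ℝ) : ℂ), ((0 : ℝ) : ℂ), ((0 : ℝ) : ℂ); ((0 : ℝ) : ℂ), ((1 : ℝ) : ℂ), ((4/3 : ℝ) : ℂ); ((0 : ℝ) : ℂ), ((0 : ℝ) : ℂ), ((1 : ℝ) : ℂ)]) (c := (1/4 : ℝ)) (d := ![(3/4 : ℝ), (3/4 : ℝ), (5/12 : ℝ)]) (by norm_num) (by intro i; fin_cases i <;> norm_num) (by ext i j; fin_cases i <;> fin_cases j <;> norm_num [mA1, mA2, mB1, mB2, mCP, mCQ, mD, Matrix.mul_apply, Matrix.conjTranspose_apply, Matrix.diagonal_apply, Fin.sum_univ_three, pow_two, Matrix.cons_val_two, Matrix.vecHead, Matrix.vecTail, map_ofNat, map_div₀, map_neg, Fin.ext_iff, Complex.ext_iff])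
  refine ⟨mA1, mA2, mB1, mB2, hA1, hA2, hB1, hB2, ?_⟩
  intro hle
  have hP : (mA1 ^ 2 + mA2 ^ 2).PosSemidef :=
    (hA1.posSemidef.pow 2).add (hA2.posSemidef.pow 2)
  have hQ : (mB1 ^ 2 + mB2 ^ 2).PosSemidef :=
    (hB1.posSemidef.pow 2).add (hB2.posSemidef.pow 2)
  have hM : ((mA1 + mB1) ^ 2 + (mA2 + mB2) ^ 2).PosSemidef :=
    ((hA1.add hB1).posSemidef.pow 2).add ((hA2.add hB2).posSemidef.pow 2)
  have hle' : ((hP.sqrt + hQ.sqrt) - hM.sqrt).PosSemidef := by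
    have h0 : ((mpow (mA1 ^ 2 + mA2 ^ 2) (1/2) + mpow (mB1 ^ 2 + mB2 ^ 2) (1/2)) -
        mpow ((mA1 + mB1) ^ 2 + (mA2 + mB2) ^ 2) (1/2)).PosSemidef := hle
    rwa [mpow_half_eq_sqrt hM, mpow_half_eq_sqrt hP, mpow_half_eq_sqrt hQ] at h0
  have hCP : mCP.PosSemidef := psd_of_ldl (B := !![((1 : ℝ) : ℂ), ((-327/3482 : ℝ) : ℂ), ((0 : ℝ) : ℂ); ((0 : ℝ) : ℂ), ((1 : ℝ) : ℂ), ((0 : ℝ) : ℂ); ((0 : ℝ) : ℂ), ((0 : ℝ) : ℂ), ((1 : ℝ) : ℂ)]) (d := ![(1741/500 : ℝ), (6958049/3482000 : ℝ), (149/100 : ℝ)]) (by intro i; fin_cases i <;> norm_num) (by ext i j; fin_cases i <;> fin_cases j <;> norm_num [mA1, mA2, mB1, mB2, mCP, mCQ, mD, Matrix.mul_apply, Matrix.conjTranspose_apply, Matrix.diagonal_apply, Fin.sum_univ_three, pow_two, Matrix.cons_val_two, Matrix.vecHead, Matrix.vecTail, map_ofNat, map_div₀, map_neg, Fin.ext_iff,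 Complex.ext_iff])
  have hCQ : mCQ.PosSemidef := psd_of_ldl (B := !![((1 : ℝ) : ℂ), ((0 : ℝ) : ℂ), ((0 : ℝ) : ℂ); ((0 : ℝ) : ℂ), ((1 : ℝ) : ℂ), ((169/2048 : ℝ) : ℂ); ((0 : ℝ) : ℂ), ((0 : ℝ) : ℂ), ((1 : ℝ) : ℂ)]) (d := ![(149/100 : ℝ), (256/125 : ℝ), (5466223/2048000 : ℝ)]) (by intro i; fin_cases i <;> norm_num) (by ext i j; fin_cases i <;> fin_cases j <;> norm_num [mA1, mA2, mB1, mB2, mCP, mCQ, mD, Matrix.mul_apply, Matrix.conjTranspose_apply, Matrix.diagonal_apply, Fin.sum_univ_three, pow_two, Matrix.cons_val_two, Matrix.vecHead, Matrix.vecTail, map_ofNat, map_div₀, map_neg, Fin.ext_iff, Complex.ext_iff])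
  have hD : mD.PosSemidef := psd_of_ldl (B := !![((1 : ℝ) : ℂ), ((-243/4804 : ℝ) : ℂ), ((231/4804 : ℝ) : ℂ); ((0 : ℝ) : ℂ), ((1 : ℝ) : ℂ), ((728693/17076819 : ℝ) : ℂ); ((0 : ℝ) : ℂ), ((0 : ℝ) : ℂ), ((1 : ℝ) : ℂ)]) (d := ![(1201/250 : ℝ), (17076819/4804000 : ℝ), (67836293483/17076819000 : ℝ)]) (by intro i; fin_cases i <;> norm_num) (by ext i j; fin_cases i <;> fin_cases j <;> norm_num [mA1, mA2, mB1, mB2, mCP, mCQ, mD, Matrix.mul_apply, Matrix.conjTranspose_apply, Matrix.diagonal_apply, Fin.sum_univ_three, pow_two, Matrix.cons_val_two, Matrix.vecHead, Matrix.vecTail, map_ofNat, map_div₀, map_neg, Fin.ext_iff, Complex.ext_iff])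
  have c1 : (mCP ^ 2 - (mA1 ^ 2 + mA2 ^ 2)).PosSemidef := psd_of_ldl (B := !![((1 : ℝ) : ℂ), ((-2097/21253 : ℝ) : ℂ), ((0 : ℝ) : ℂ); ((0 : ℝ) : ℂ), ((1 : ℝ) : ℂ), ((0 : ℝ) : ℂ); ((0 : ℝ) : ℂ), ((0 : ℝ) : ℂ), ((1 : ℝ) : ℂ)]) (d := ![(21253/1000000 : ℝ), (288256401/21253000000 : ℝ), (101/10000 : ℝ)]) (by intro i; fin_cases i <;> norm_num) (by ext i j; fin_cases i <;> fin_cases j <;> norm_num [mA1, mA2, mB1, mB2, mCP, mCQ, mD, Matrix.mul_apply, Matrix.conjTranspose_apply, Matrix.diagonal_apply, Fin.sum_univ_three, pow_two, Matrix.cons_val_two, Matrix.vecHead, Matrix.vecTail, map_ofNat, map_div₀, map_neg, Fin.ext_iff, Complex.ext_iff])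
  have c2 : (mCQ ^ 2 - (mB1 ^ 2 + mB2 ^ 2)).PosSemidef := psd_of_ldl (B := !![((1 : ℝ) : ℂ), ((0 : ℝ) : ℂ), ((0 : ℝ) : ℂ); ((0 : ℝ) : ℂ), ((1 : ℝ) : ℂ), ((-461/12865 : ℝ) : ℂ); ((0 : ℝ) : ℂ), ((0 : ℝ) : ℂ), ((1 : ℝ) : ℂ)]) (d := ![(101/10000 : ℝ), (2573/200000 : ℝ), (219135729/12865000000 : ℝ)]) (by intro i; fin_cases i <;> norm_num) (by ext i j; fin_cases i <;> fin_cases j <;> norm_num [mA1, mA2, mB1, mB2, mCP, mCQ, mD, Matrix.mul_apply, Matrix.conjTranspose_apply, Matrix.diagonal_apply, Fin.sum_univ_three, pow_two, Matrix.cons_val_two, Matrix.vecHead, Matrix.vecTail, map_ofNat, map_div₀, map_neg, Fin.ext_iff, Complex.ext_iff])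
  have c3 : (((mA1 + mB1) ^ 2 + (mA2 + mB2) ^ 2) - mD ^ 2).PosSemidef := psd_of_ldl (B := !![((1 : ℝ) : ℂ), ((1813/29174 : ℝ) : ℂ), ((1303/14587 : ℝ) : ℂ); ((0 : ℝ) : ℂ), ((1 : ℝ) : ℂ), ((-58609056/517819019 : ℝ) : ℂ); ((0 : ℝ) : ℂ), ((0 : ℝ) : ℂ), ((1 : ℝ) : ℂ)]) (d := ![(14587/500000 : ℝ), (517819019/29174000000 : ℝ), (13711244088711/517819019000000 : ℝ)]) (by intro i; fin_cases i <;> norm_num) (by ext i j; fin_cases i <;> fin_cases j <;> norm_num [mA1, mA2, mB1, mB2, mCP, mCQ, mD, Matrix.mul_apply, Matrix.conjTranspose_apply, Matrix.diagonal_apply, Fin.sum_univ_three, pow_two, Matrix.cons_val_two, Matrix.vecHead, Matrix.vecTail, map_ofNat, map_div₀, map_neg, Fin.ext_iff, Complex.ext_iff])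
  have m1 : (mCP - hP.sqrt).PosSemidef := by
    have h := sqrt_mono hP (hCP.pow 2) c1
    rwa [hCP.sqrt_sq] at h
  have m2 : (mCQ - hQ.sqrt).PosSemidef := by
    have h := sqrt_mono hQ (hCQ.pow 2) c2
    rwa [hCQ.sqrt_sq] at h
  have m3 : (hM.sqrt - mD).PosSemidef := by
    have h := sqrt_mono (hD.pow 2) hM c3
    rwa [hD.sqrt_sq] at h
  have hsum : (mCP + mCQ - mD).PosSemidef := by
    have h := ((m1.add m2).add hle').add m3
    have e : (mCP - hP.sqrt + (mCQ - hQ.sqrt) + ((hP.sqrt + hQ.sqrt) - hM.sqrt) +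
        (hM.sqrt - mD)) = mCP + mCQ - mD := by abel
    rwa [e] at h
  have hval := hsum.dotProduct_mulVec_nonneg ![((73/100 : ℝ) : ℂ), ((7/100 : ℝ) : ℂ), ((17/25 : ℝ) : ℂ)]
  have heval : star ![((73/100 : ℝ) : ℂ), ((7/100 : ℝ) : ℂ), ((17/25 : ℝ) : ℂ)] ⬝ᵥ
      ((mCP + mCQ - mD) *ᵥ ![((73/100 : ℝ) : ℂ), ((7/100 : ℝ) : ℂ), ((17/25 : ℝ) : ℂ)]) =
      ((-292577/5000000 : ℝ) : ℂ) := by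
    simp [mCP, mCQ, mD, Matrix.sub_apply, Matrix.add_apply, Matrix.mulVec, dotProduct,
      Fin.sum_univ_three, Pi.star_apply, Complex.star_def, Complex.conj_ofReal,
      map_ofNat, map_div₀, map_inv₀, map_neg]
    push_cast
    norm_num
  rw [heval] at hval
  have : (0:ℝ) ≤ -292577/5000000 := by exact_mod_cast hval
  norm_num at this
end

section
/- Let Φ be a unital positive linear map on matrices and let A, B be positive definite with mI ≤ A, B ≤ MI, 0 < m < M, h = M/m. Then S(h)^{-2} (Δ_Φ(A) + Δ_Φ(B)) ≤ Δ_Φ(A+B) ≤ S(h)^2 (Δ_Φ(A) + Δ_Φ(B)), where Δ_Φ(X) = exp(Φ(log X)) and S is the Specht ratio. -/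
open scoped ComplexOrder Kronecker

/-- The operator valued determinant `Δ_Φ(X) = exp Φ(log X)`. -/
noncomputable def DeltaPhi {n m : Type*} [Fintype n] [DecidableEq n]
    [Fintype m] [DecidableEq m]
    (Φ : Matrix n n ℂ →ₗ[ℂ] Matrix m m ℂ) (X : Matrix n n ℂ) : Matrix m m ℂ :=
  cfc Real.exp (Φ (cfc Real.log X))

set_option linter.unusedSectionVars false

namespace SpechtAux


noncomputable def cmu (m M : ℝ) : ℝ := (M - m) / (Real.log M - Real.log m)
noncomputable def cnu (m M : ℝ) : ℝ := m - cmu m M * Real.log m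

variable {m M : ℝ}

lemma logdiff_pos (hm : 0 < m) (hmM : m < M) : 0 < Real.log M - Real.log m :=
  sub_pos.2 (Real.log_lt_log hm hmM)

lemma cmu_pos (hm : 0 < m) (hmM : m < M) : 0 < cmu m M :=
  div_pos (sub_pos.2 hmM) (logdiff_pos hm hmM)

lemma exp_le_chord (hm : 0 < m) (hmM : m < M) {s : ℝ}
    (hs1 : Real.log m ≤ s) (hs2 : s ≤ Real.log M) :
    Real.exp s ≤ cmu m M * s + cnu m M := by
  set a := Real.log m with ha
  set b := Real.log M with hb
  have hab : 0 < b - a := logdiff_pos hm hmM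
  set t : ℝ := (b - s) / (b - a) with htdef
  set u : ℝ := (s - a) / (b - a) with hudef
  have htb : t * (b - a) = b - s := div_mul_cancel₀ _ hab.ne'
  have hub : u * (b - a) = s - a := div_mul_cancel₀ _ hab.ne'
  have ht : 0 ≤ t := div_nonneg (by linarith) hab.le
  have hu : 0 ≤ u := div_nonneg (by linarith) hab.le
  have htu : t + u = 1 := by
    have : (t + u) * (b - a) = 1 * (b - a) := by linear_combination htb + hub
    exact mul_right_cancel₀ hab.ne' this
  have hs : t • a + u • b = s := by
    simp only [smul_eq_mul]
    have : (t * a + u * b) * (b - a) = s * (b - a) := by linear_combination a * htb + b * hub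
    exact mul_right_cancel₀ hab.ne' this
  have hconv := convexOn_exp.2 (Set.mem_univ a) (Set.mem_univ b) ht hu htu
  rw [hs] at hconv
  have hea : Real.exp a = m := Real.exp_log hm
  have heb : Real.exp b = M := Real.exp_log (hm.trans hmM)
  have hc : cmu m M * (b - a) = M - m := by rw [cmu, ← ha, ← hb]; exact div_mul_cancel₀ _ hab.ne'
  have hfin : t • Real.exp a + u • Real.exp b = cmu m M * s + cnu m M := by
    simp only [smul_eq_mul, hea, heb, cnu, ← ha]
    have : (t * m + u * M) * (b - a) = (cmu m M * s + (m - cmu m M * a)) * (b - a) := by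
      linear_combination m * htb + M * hub + (a - s) * hc
    exact mul_right_cancel₀ hab.ne' this
  linarith [hconv, hfin.symm.le]

lemma specht_eq (hm : 0 < m) (hmM : m < M) :
    Specht (M / m) = cmu m M * Real.exp (cnu m M / cmu m M - 1) := by
  set h := M / m with hh
  have hm' : m ≠ 0 := hm.ne'
  have hh1 : 1 < h := (one_lt_div hm).2 hmM
  have hhne : h ≠ 1 := hh1.ne'
  have hh0 : 0 < h := lt_trans one_pos hh1
  have hl : Real.log M - Real.log m = Real.log h := by
    rw [hh, Real.log_div (hm.trans hmM).ne' hm']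
  have hlpos : 0 < Real.log h := Real.log_pos hh1
  have hM : M = m * h := by rw [hh]; field_simp
  have hcmu : cmu m M = m * (h - 1) / Real.log h := by
    rw [cmu, hl, hM]; congr 1; ring
  have hcmupos : 0 < cmu m M := cmu_pos hm hmM
  have hh1' : h - 1 ≠ 0 := sub_ne_zero.2 hhne
  have hcnu' : cnu m M = cmu m M * (Real.log h / (h - 1) - Real.log m) := by
    rw [cnu, hcmu]
    field_simp
  have hratio : cnu m M / cmu m M = Real.log h / (h - 1) - Real.log m := by
    rw [hcnu', mul_comm, mul_div_assoc, div_self hcmupos.ne', mul_one]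
  rw [Specht, if_neg hhne, hratio, hcmu]
  rw [Real.rpow_def_of_pos hh0]
  rw [show Real.log h / (h - 1) - Real.log m - 1
      = Real.log h * (1 / (h - 1)) + (-(Real.log m) + (-1)) by ring]
  rw [Real.exp_add, Real.exp_add, Real.exp_neg, Real.exp_neg, Real.exp_log hm]
  field_simp

lemma specht_pos (hm : 0 < m) (hmM : m < M) : 0 < Specht (M / m) := by
  rw [specht_eq hm hmM]; exact mul_pos (cmu_pos hm hmM) (Real.exp_pos _)

lemma chord_le_specht_exp (hm : 0 < m) (hmM : m < M) (s : ℝ) :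
    cmu m M * s + cnu m M ≤ Specht (M / m) * Real.exp s := by
  have hcmupos : 0 < cmu m M := cmu_pos hm hmM
  rw [specht_eq hm hmM]
  have key : cnu m M / cmu m M - 1 + s + 1 ≤ Real.exp (cnu m M / cmu m M - 1 + s) :=
    Real.add_one_le_exp _
  have : cmu m M * (cnu m M / cmu m M - 1 + s + 1) ≤
      cmu m M * Real.exp (cnu m M / cmu m M - 1 + s) :=
    mul_le_mul_of_nonneg_left key hcmupos.le
  calc cmu m M * s + cnu m M = cmu m M * (cnu m M / cmu m M - 1 + s + 1) := by
        field_simp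
        ring
      _ ≤ cmu m M * Real.exp (cnu m M / cmu m M - 1 + s) := this
      _ = cmu m M * Real.exp (cnu m M / cmu m M - 1) * Real.exp s := by
        rw [Real.exp_add]; ring

lemma le_chord (hm : 0 < m) (hmM : m < M) {t : ℝ} (h1 : m ≤ t) (h2 : t ≤ M) :
    t ≤ cmu m M * Real.log t + cnu m M := by
  have ht : 0 < t := lt_of_lt_of_le hm h1
  have := exp_le_chord hm hmM (Real.log_le_log hm h1) (Real.log_le_log ht h2)
  rwa [Real.exp_log ht] at this

lemma chord_log_le (hm : 0 < m) (hmM : m < M) {t : ℝ} (ht : 0 < t) :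
    cmu m M * Real.log t + cnu m M ≤ Specht (M / m) * t := by
  have := chord_le_specht_exp hm hmM (Real.log t)
  rwa [Real.exp_log ht] at this

end SpechtAux

namespace MatAux
variable {n : Type*} [Fintype n] [DecidableEq n]
variable {k : Type*} [Fintype k] [DecidableEq k]


variable {n : Type*} [Fintype n] [DecidableEq n]

lemma continuousOn_spectrum (f : ℝ → ℝ) (A : Matrix n n ℂ) :
    ContinuousOn f (spectrum ℝ A) :=
  Matrix.finite_real_spectrum.continuousOn f

omit [Fintype n] [DecidableEq n] in
lemma isSelfAdjoint_of_isHermitian {A : Matrix n n ℂ} (hA : A.IsHermitian) :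
    IsSelfAdjoint A := hA

lemma loewner_cfc_mono {A : Matrix n n ℂ} (hA : A.IsHermitian) {f g : ℝ → ℝ}
    (h : ∀ i, f (hA.eigenvalues i) ≤ g (hA.eigenvalues i)) :
    LoewnerLE (cfc f A) (cfc g A) := by
  unfold LoewnerLE
  rw [hA.cfc_eq f, hA.cfc_eq g, Matrix.IsHermitian.cfc, Matrix.IsHermitian.cfc]
  rw [Unitary.conjStarAlgAut_apply, Unitary.conjStarAlgAut_apply]
  rw [← Matrix.sub_mul, ← Matrix.mul_sub, Matrix.diagonal_sub]
  rw [Matrix.star_eq_conjTranspose]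
  apply Matrix.PosSemidef.mul_mul_conjTranspose_same
  apply Matrix.PosSemidef.diagonal
  intro i
  simp only [Pi.sub_apply, Function.comp_apply, Pi.zero_apply]
  rw [← RCLike.ofReal_sub]
  exact RCLike.ofReal_nonneg.mpr (sub_nonneg.2 (h i))

lemma cfc_id_eq {A : Matrix n n ℂ} (hA : A.IsHermitian) :
    cfc (fun x : ℝ => x) A = A :=
  cfc_id ℝ A hA

lemma cfc_const_eq {A : Matrix n n ℂ} (hA : A.IsHermitian) (r : ℝ) :
    cfc (fun _ : ℝ => r) A = r • (1 : Matrix n n ℂ) := by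
  have h1 := cfc_const (R := ℝ) r A hA
  rw [h1, Algebra.algebraMap_eq_smul_one]

lemma cfc_affine {A : Matrix n n ℂ} (hA : A.IsHermitian) (μ ν : ℝ) (f : ℝ → ℝ) :
    cfc (fun x : ℝ => μ * f x + ν) A = μ • cfc f A + ν • (1 : Matrix n n ℂ) := by
  have h1 := cfc_add A (fun x => μ * f x) (fun _ => ν) (continuousOn_spectrum _ _)
    (continuousOn_spectrum _ _)
  have h2 := cfc_const (R := ℝ) ν A hA
  have h3 : (fun x : ℝ => μ * f x) = fun x => μ • f x := by ext x; simp [smul_eq_mul]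
  have h4 := cfc_smul μ f A (continuousOn_spectrum _ _)
  rw [h1, h2, Algebra.algebraMap_eq_smul_one, h3, h4]

lemma cfc_smul_fun {A : Matrix n n ℂ} (r : ℝ) (f : ℝ → ℝ) :
    cfc (fun x : ℝ => r * f x) A = r • cfc f A := by
  have h3 : (fun x : ℝ => r * f x) = fun x => r • f x := by ext x; simp [smul_eq_mul]
  have h4 := cfc_smul r f A (continuousOn_spectrum _ _)
  rw [h3, h4]


variable {n : Type*} [Fintype n] [DecidableEq n]

lemma star_dot_self_eigenvector {A : Matrix n n ℂ} (hA : A.IsHermitian) (i : n) :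
    dotProduct (star ⇑(hA.eigenvectorBasis i)) ⇑(hA.eigenvectorBasis i) = 1 := by
  rw [dotProduct_comm, ← EuclideanSpace.inner_eq_star_dotProduct]
  have h1 : ‖hA.eigenvectorBasis i‖ = 1 := hA.eigenvectorBasis.orthonormal.1 i
  rw [@inner_self_eq_norm_sq_to_K ℂ]
  rw [h1]
  norm_num

lemma eig_le_of_loewner {A : Matrix n n ℂ} (hA : A.IsHermitian) {a : ℝ}
    (h : LoewnerLE A (a • (1 : Matrix n n ℂ))) (i : n) : hA.eigenvalues i ≤ a := by
  have h2 := Matrix.PosSemidef.dotProduct_mulVec_nonneg h ⇑(hA.eigenvectorBasis i)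
  rw [Matrix.sub_mulVec, Matrix.smul_mulVec, Matrix.one_mulVec,
    hA.mulVec_eigenvectorBasis, dotProduct_sub, dotProduct_smul,
    dotProduct_smul, star_dot_self_eigenvector] at h2
  rw [sub_nonneg] at h2
  have : (hA.eigenvalues i : ℂ) ≤ (a : ℂ) := by
    simpa [Complex.real_smul] using h2
  exact_mod_cast this

lemma le_eig_of_loewner {A : Matrix n n ℂ} (hA : A.IsHermitian) {a : ℝ}
    (h : LoewnerLE (a • (1 : Matrix n n ℂ)) A) (i : n) : a ≤ hA.eigenvalues i := by
  have h2 := Matrix.PosSemidef.dotProduct_mulVec_nonneg h ⇑(hA.eigenvectorBasis i)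
  rw [Matrix.sub_mulVec, Matrix.smul_mulVec, Matrix.one_mulVec,
    hA.mulVec_eigenvectorBasis, dotProduct_sub, dotProduct_smul,
    dotProduct_smul, star_dot_self_eigenvector] at h2
  rw [sub_nonneg] at h2
  have : (a : ℂ) ≤ (hA.eigenvalues i : ℂ) := by
    simpa [Complex.real_smul] using h2
  exact_mod_cast this


variable {n : Type*} [Fintype n] [DecidableEq n]
variable {k : Type*} [Fintype k] [DecidableEq k]

lemma real_smul_eq (r : ℝ) (C : Matrix n n ℂ) : r • C = (r : ℂ) • C := by
  ext i j
  simp [Complex.real_smul]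

lemma psd_smul {M : Matrix n n ℂ} (hM : M.PosSemidef) {r : ℝ} (hr : 0 ≤ r) :
    (r • M).PosSemidef := by
  refine Matrix.PosSemidef.of_dotProduct_mulVec_nonneg ?_ ?_
  · unfold Matrix.IsHermitian
    rw [real_smul_eq, Matrix.conjTranspose_smul, hM.1]
    simp [Complex.conj_ofReal]
  · intro x
    rw [real_smul_eq, Matrix.smul_mulVec, dotProduct_smul, smul_eq_mul]
    exact mul_nonneg (by exact_mod_cast hr) (hM.dotProduct_mulVec_nonneg x)

lemma loewner_refl (A : Matrix n n ℂ) (hA : A.IsHermitian) : LoewnerLE A A := by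
  unfold LoewnerLE; simpa using Matrix.PosSemidef.zero

lemma loewner_trans {A B C : Matrix n n ℂ} (h1 : LoewnerLE A B) (h2 : LoewnerLE B C) :
    LoewnerLE A C := by
  have := h2.add h1
  unfold LoewnerLE
  convert this using 1
  abel

lemma loewner_add {A B C D : Matrix n n ℂ} (h1 : LoewnerLE A B) (h2 : LoewnerLE C D) :
    LoewnerLE (A + C) (B + D) := by
  have := h1.add h2
  unfold LoewnerLE
  convert this using 1
  abel

lemma loewner_smul {A B : Matrix n n ℂ} (h : LoewnerLE A B) {r : ℝ} (hr : 0 ≤ r) :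
    LoewnerLE (r • A) (r • B) := by
  unfold LoewnerLE
  rw [← smul_sub]
  exact psd_smul h hr

lemma phi_mono (Φ : Matrix n n ℂ →ₗ[ℂ] Matrix k k ℂ)
    (hΦpos : ∀ A : Matrix n n ℂ, A.PosSemidef → (Φ A).PosSemidef)
    {C D : Matrix n n ℂ} (h : LoewnerLE C D) : LoewnerLE (Φ C) (Φ D) := by
  unfold LoewnerLE at *
  rw [← map_sub]
  exact hΦpos _ h

lemma phi_real_smul (Φ : Matrix n n ℂ →ₗ[ℂ] Matrix k k ℂ) (r : ℝ) (C : Matrix n n ℂ) :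
    Φ (r • C) = r • Φ C := by
  rw [real_smul_eq, map_smul, ← real_smul_eq]

lemma smul_one_isHermitian (r : ℝ) : (r • (1 : Matrix n n ℂ)).IsHermitian := by
  unfold Matrix.IsHermitian
  rw [real_smul_eq, Matrix.conjTranspose_smul, Matrix.conjTranspose_one]
  simp [Complex.conj_ofReal]


lemma phi_isHermitian (Φ : Matrix n n ℂ →ₗ[ℂ] Matrix k k ℂ)
    (hΦpos : ∀ A : Matrix n n ℂ, A.PosSemidef → (Φ A).PosSemidef)
    (hΦunital : Φ 1 = 1)
    {C : Matrix n n ℂ} (hC : C.IsHermitian) : (Φ C).IsHermitian := by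
  obtain ⟨t, ht⟩ : ∃ t : ℝ, ∀ i, -t ≤ hC.eigenvalues i := by
    obtain ⟨t, ht⟩ := (Set.finite_range fun i => -hC.eigenvalues i).bddAbove
    exact ⟨t, fun i => neg_le.1 (ht ⟨i, rfl⟩)⟩
  have h0 : LoewnerLE ((-t) • (1 : Matrix n n ℂ)) C := by
    have := loewner_cfc_mono hC (f := fun _ => -t) (g := fun x => x) (fun i => ht i)
    rwa [cfc_const_eq hC, cfc_id_eq hC] at this
  have hpsd : (C - (-t) • (1 : Matrix n n ℂ)).PosSemidef := h0
  have heq : Φ C = Φ (C - (-t) • (1 : Matrix n n ℂ)) + (-t) • (1 : Matrix k k ℂ) := by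
    rw [map_sub, phi_real_smul, hΦunital, sub_add_cancel]
  rw [heq]
  exact ((hΦpos _ hpsd).1).add (smul_one_isHermitian _)

lemma key (Φ : Matrix n n ℂ →ₗ[ℂ] Matrix k k ℂ)
    (hΦpos : ∀ A : Matrix n n ℂ, A.PosSemidef → (Φ A).PosSemidef)
    (hΦunital : Φ 1 = 1)
    {X : Matrix n n ℂ} (hX : X.PosDef)
    {m M : ℝ} (hm : 0 < m) (hmM : m < M)
    (hlow : LoewnerLE (m • (1 : Matrix n n ℂ)) X)
    (hup : LoewnerLE X (M • (1 : Matrix n n ℂ))) :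
    LoewnerLE (DeltaPhi Φ X) (Specht (M / m) • Φ X) ∧
      LoewnerLE (Φ X) (Specht (M / m) • DeltaPhi Φ X) := by
  have hXh : X.IsHermitian := hX.1
  set μ := SpechtAux.cmu m M with hμ
  set ν := SpechtAux.cnu m M with hν
  set S := Specht (M / m) with hS
  have heig1 : ∀ i, m ≤ hXh.eigenvalues i := le_eig_of_loewner hXh hlow
  have heig2 : ∀ i, hXh.eigenvalues i ≤ M := eig_le_of_loewner hXh hup
  set T := Φ (cfc Real.log X) with hTdef
  have hLh : (cfc Real.log X).IsHermitian := cfc_predicate Real.log X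
  have hTh : T.IsHermitian := phi_isHermitian Φ hΦpos hΦunital hLh
  have hlog_low : LoewnerLE ((Real.log m) • (1 : Matrix n n ℂ)) (cfc Real.log X) := by
    have := loewner_cfc_mono hXh (f := fun _ => Real.log m) (g := Real.log)
      (fun i => Real.log_le_log hm (heig1 i))
    rwa [cfc_const_eq hXh] at this
  have hlog_up : LoewnerLE (cfc Real.log X) ((Real.log M) • (1 : Matrix n n ℂ)) := by
    have := loewner_cfc_mono hXh (f := Real.log) (g := fun _ => Real.log M)
      (fun i => Real.log_le_log (lt_of_lt_of_le hm (heig1 i)) (heig2 i))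
    rwa [cfc_const_eq hXh] at this
  have hT_low : LoewnerLE ((Real.log m) • (1 : Matrix k k ℂ)) T := by
    have := phi_mono Φ hΦpos hlog_low
    rwa [phi_real_smul, hΦunital] at this
  have hT_up : LoewnerLE T ((Real.log M) • (1 : Matrix k k ℂ)) := by
    have := phi_mono Φ hΦpos hlog_up
    rwa [phi_real_smul, hΦunital] at this
  have hTeig1 : ∀ i, Real.log m ≤ hTh.eigenvalues i := le_eig_of_loewner hTh hT_low
  have hTeig2 : ∀ i, hTh.eigenvalues i ≤ Real.log M := eig_le_of_loewner hTh hT_up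
  have e0 : cfc (fun x : ℝ => μ * x + ν) T = μ • T + ν • (1 : Matrix k k ℂ) := by
    rw [cfc_affine hTh μ ν (fun x => x), cfc_id_eq hTh]
  have e1 : μ • T + ν • (1 : Matrix k k ℂ)
      = Φ (cfc (fun t : ℝ => μ * Real.log t + ν) X) := by
    rw [cfc_affine hXh μ ν Real.log, map_add, phi_real_smul, phi_real_smul, hΦunital]
  have eS : cfc (fun t : ℝ => S * t) X = S • X := by
    have h4 := cfc_smul_fun (A := X) S (fun x : ℝ => x)
    rw [cfc_id_eq hXh] at h4
    exact h4
  have eSexp : cfc (fun s : ℝ => S * Real.exp s) T = S • cfc Real.exp T :=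
    cfc_smul_fun S Real.exp
  have c1 : LoewnerLE (cfc Real.exp T) (μ • T + ν • (1 : Matrix k k ℂ)) := by
    have := loewner_cfc_mono hTh (f := Real.exp) (g := fun s => μ * s + ν)
      (fun i => SpechtAux.exp_le_chord hm hmM (hTeig1 i) (hTeig2 i))
    rwa [e0] at this
  have c2 : LoewnerLE (cfc (fun t : ℝ => μ * Real.log t + ν) X) (S • X) := by
    have := loewner_cfc_mono hXh (f := fun t => μ * Real.log t + ν) (g := fun t => S * t)
      (fun i => SpechtAux.chord_log_le hm hmM (lt_of_lt_of_le hm (heig1 i)))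
    rwa [eS] at this
  have c3 : LoewnerLE X (cfc (fun t : ℝ => μ * Real.log t + ν) X) := by
    have := loewner_cfc_mono hXh (f := fun x => x) (g := fun t => μ * Real.log t + ν)
      (fun i => SpechtAux.le_chord hm hmM (heig1 i) (heig2 i))
    rwa [cfc_id_eq hXh] at this
  have c4 : LoewnerLE (μ • T + ν • (1 : Matrix k k ℂ)) (S • cfc Real.exp T) := by
    have := loewner_cfc_mono hTh (f := fun s => μ * s + ν) (g := fun s => S * Real.exp s)
      (fun i => SpechtAux.chord_le_specht_exp hm hmM _)
    rwa [e0, eSexp] at this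
  constructor
  · show LoewnerLE (cfc Real.exp T) (S • Φ X)
    refine loewner_trans c1 ?_
    rw [e1]
    have := phi_mono Φ hΦpos c2
    rwa [phi_real_smul] at this
  · show LoewnerLE (Φ X) (S • cfc Real.exp T)
    refine loewner_trans ?_ c4
    rw [e1]
    exact phi_mono Φ hΦpos c3

end MatAux

theorem operator_determinant_specht {n m : Type*} [Fintype n] [DecidableEq n]
    [Fintype m] [DecidableEq m]
    (Φ : Matrix n n ℂ →ₗ[ℂ] Matrix m m ℂ)
    (hΦpos : ∀ A : Matrix n n ℂ, A.PosSemidef → (Φ A).PosSemidef)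
    (hΦunital : Φ 1 = 1)
    (A B : Matrix n n ℂ) (hA : A.PosDef) (hB : B.PosDef)
    (m₀ M₀ : ℝ) (hm : 0 < m₀) (hmM : m₀ < M₀)
    (hAlow : LoewnerLE (m₀ • (1 : Matrix n n ℂ)) A)
    (hAup : LoewnerLE A (M₀ • (1 : Matrix n n ℂ)))
    (hBlow : LoewnerLE (m₀ • (1 : Matrix n n ℂ)) B)
    (hBup : LoewnerLE B (M₀ • (1 : Matrix n n ℂ))) :
    LoewnerLE ((Specht (M₀ / m₀) ^ 2)⁻¹ • (DeltaPhi Φ A + DeltaPhi Φ B))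
        (DeltaPhi Φ (A + B)) ∧
      LoewnerLE (DeltaPhi Φ (A + B))
        ((Specht (M₀ / m₀) ^ 2) • (DeltaPhi Φ A + DeltaPhi Φ B)) := by
  set S := Specht (M₀ / m₀) with hSdef
  have hS : 0 < S := SpechtAux.specht_pos hm hmM
  have hAB : (A + B).PosDef := hA.add hB
  have hratio2 : (2 * M₀) / (2 * m₀) = M₀ / m₀ :=
    mul_div_mul_left M₀ m₀ two_ne_zero
  have hABlow : LoewnerLE ((2 * m₀) • (1 : Matrix n n ℂ)) (A + B) := by
    have := MatAux.loewner_add hAlow hBlow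
    rwa [← add_smul, ← two_mul] at this
  have hABup : LoewnerLE (A + B) ((2 * M₀) • (1 : Matrix n n ℂ)) := by
    have := MatAux.loewner_add hAup hBup
    rwa [← add_smul, ← two_mul] at this
  have keyA := MatAux.key Φ hΦpos hΦunital hA hm hmM hAlow hAup
  have keyB := MatAux.key Φ hΦpos hΦunital hB hm hmM hBlow hBup
  have keyAB := MatAux.key Φ hΦpos hΦunital hAB (by positivity : (0:ℝ) < 2 * m₀)
    (by linarith : 2 * m₀ < 2 * M₀) hABlow hABup
  rw [hratio2] at keyAB
  have hmapadd : Φ (A + B) = Φ A + Φ B := map_add Φ A B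
  -- upper bound
  have up1 : LoewnerLE (DeltaPhi Φ (A + B)) (S • (Φ A + Φ B)) := by
    have := keyAB.1
    rwa [hmapadd] at this
  have up2 : LoewnerLE (S • (Φ A + Φ B)) (S ^ 2 • (DeltaPhi Φ A + DeltaPhi Φ B)) := by
    have h₁ := MatAux.loewner_smul (MatAux.loewner_add keyA.2 keyB.2) hS.le
    have e : S • (S • DeltaPhi Φ A + S • DeltaPhi Φ B)
        = S ^ 2 • (DeltaPhi Φ A + DeltaPhi Φ B) := by
      rw [← smul_add, smul_smul, sq]
    rwa [e] at h₁
  have upper := MatAux.loewner_trans up1 up2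
  -- lower bound
  have low1 : LoewnerLE (DeltaPhi Φ A + DeltaPhi Φ B) (S • Φ (A + B)) := by
    have h₁ := MatAux.loewner_add keyA.1 keyB.1
    rw [hmapadd, smul_add]
    exact h₁
  have low2 : LoewnerLE (S • Φ (A + B)) (S ^ 2 • DeltaPhi Φ (A + B)) := by
    have h₁ := MatAux.loewner_smul keyAB.2 hS.le
    rwa [smul_smul, ← sq] at h₁
  have lower := MatAux.loewner_trans low1 low2
  have hS2 : (S ^ 2 : ℝ) ≠ 0 := by positivity
  have lower' : LoewnerLE ((S ^ 2)⁻¹ • (DeltaPhi Φ A + DeltaPhi Φ B)) (DeltaPhi Φ (A + B)) := by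
    have h₁ := MatAux.loewner_smul lower (by positivity : (0:ℝ) ≤ (S ^ 2)⁻¹)
    rwa [smul_smul, inv_mul_cancel₀ hS2, one_smul] at h₁
  exact ⟨lower', upper⟩
end

section
/- If A and B are positive definite n×n matrices (n ≥ 1), then det(A+B)^{1/n} ≥ det(A)^{1/n} + det(B)^{1/n} (Minkowski's determinant inequality). -/
open scoped ComplexOrder Kronecker

open Finset in
lemma scalar_key (n : ℕ) (hn : 1 ≤ n) (f : Fin n → ℝ) (hf : ∀ i, 0 ≤ f i) :
    1 + (∏ i, f i) ^ ((n : ℝ)⁻¹) ≤ (∏ i, (1 + f i)) ^ ((n : ℝ)⁻¹) := by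
  have hn' : (0:ℝ) < n := by exact_mod_cast hn
  have h1f : ∀ i, (0:ℝ) < 1 + f i := fun i => by linarith [hf i]
  have hP : 0 < ∏ i, (1 + f i) := prod_pos fun i _ => h1f i
  have hwsum : ∑ _i : Fin n, (n:ℝ)⁻¹ = 1 := by
    simp [Finset.sum_const]
    field_simp
  have hw : ∀ i ∈ univ, (0:ℝ) ≤ (fun _ : Fin n => (n:ℝ)⁻¹) i :=
    fun i _ => by positivity
  have H1 := Real.geom_mean_le_arith_mean_weighted univ (fun _ => (n:ℝ)⁻¹)
    (fun i => 1 / (1 + f i)) hw hwsum (fun i _ => le_of_lt (div_pos one_pos (h1f i)))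
  have H2 := Real.geom_mean_le_arith_mean_weighted univ (fun _ => (n:ℝ)⁻¹)
    (fun i => f i / (1 + f i)) hw hwsum (fun i _ => div_nonneg (hf i) (h1f i).le)
  have hsum : (∑ i, (n:ℝ)⁻¹ * (1 / (1 + f i))) + (∑ i, (n:ℝ)⁻¹ * (f i / (1 + f i))) = 1 := by
    rw [← Finset.sum_add_distrib]
    have : ∀ i ∈ univ, (n:ℝ)⁻¹ * (1 / (1 + f i)) + (n:ℝ)⁻¹ * (f i / (1 + f i)) = (n:ℝ)⁻¹ := by
      intro i _
      rw [← mul_add, ← add_div]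
      rw [add_comm (1:ℝ) (f i)] 
      rw [div_self (ne_of_gt (by linarith [hf i] : (0:ℝ) < f i + 1)), mul_one]
    rw [Finset.sum_congr rfl this, hwsum]
  have hprod1 : (∏ i, (1 / (1 + f i)) ^ ((n:ℝ)⁻¹)) =
      1 / (∏ i, (1 + f i)) ^ ((n:ℝ)⁻¹) := by
    rw [Real.finset_prod_rpow _ _ (fun i _ => le_of_lt (div_pos one_pos (h1f i)))]
    rw [Finset.prod_div_distrib, Finset.prod_const_one, Real.div_rpow zero_le_one
      (le_of_lt hP), Real.one_rpow]
  have hprod2 : (∏ i, (f i / (1 + f i)) ^ ((n:ℝ)⁻¹)) =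
      (∏ i, f i) ^ ((n:ℝ)⁻¹) / (∏ i, (1 + f i)) ^ ((n:ℝ)⁻¹) := by
    rw [Real.finset_prod_rpow _ _ (fun i _ => div_nonneg (hf i) (h1f i).le)]
    rw [Finset.prod_div_distrib, Real.div_rpow (Finset.prod_nonneg fun i _ => hf i)
      (le_of_lt hP)]
  rw [hprod1] at H1
  rw [hprod2] at H2
  have key : 1 / (∏ i, (1 + f i)) ^ ((n:ℝ)⁻¹) +
      (∏ i, f i) ^ ((n:ℝ)⁻¹) / (∏ i, (1 + f i)) ^ ((n:ℝ)⁻¹) ≤ 1 := by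
    calc _ ≤ (∑ i, (n:ℝ)⁻¹ * (1 / (1 + f i))) + (∑ i, (n:ℝ)⁻¹ * (f i / (1 + f i))) :=
      add_le_add H1 H2
    _ = 1 := hsum
  have hPr : 0 < (∏ i, (1 + f i)) ^ ((n:ℝ)⁻¹) := Real.rpow_pos_of_pos hP _
  rw [← add_div, div_le_one hPr] at key
  linarith


open Matrix MatrixOrder in
private theorem mdi_aux (n : ℕ) (hn : 1 ≤ n)
    (A B : Matrix (Fin n) (Fin n) ℝ) (hA : A.PosDef) (hB : B.PosDef) :
    A.det ^ ((n : ℝ)⁻¹) + B.det ^ ((n : ℝ)⁻¹) ≤ (A + B).det ^ ((n : ℝ)⁻¹) := by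
  set S := CFC.sqrt A with hSdef
  have hSpsd : S.PosSemidef := Matrix.nonneg_iff_posSemidef.mp (CFC.sqrt_nonneg A)
  have hSS : S * S = A := CFC.sqrt_mul_sqrt_self A (Matrix.nonneg_iff_posSemidef.mpr hA.posSemidef)
  have hdetA : 0 < A.det := hA.det_pos
  have hdetB : 0 < B.det := hB.det_pos
  have hdetS : S.det ≠ 0 := by
    intro h
    rw [← hSS, det_mul, h, mul_zero] at hdetA
    exact lt_irrefl 0 hdetA
  have hSu : IsUnit S.det := isUnit_iff_ne_zero.mpr hdetS
  have hSinvH : S⁻¹.IsHermitian := hSpsd.1.inv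
  set C := S⁻¹ * B * S⁻¹ with hCdef
  have hCpsd : C.PosSemidef := by
    have := hB.posSemidef.mul_mul_conjTranspose_same S⁻¹
    rwa [hSinvH.eq] at this
  have hCH : C.IsHermitian := hCpsd.1
  -- A + B = S * (1 + C) * S
  have hAB : A + B = S * (1 + C) * S := by
    rw [mul_add, add_mul, mul_one, hSS, hCdef]
    congr 1
    rw [← Matrix.mul_assoc, ← Matrix.mul_assoc, Matrix.mul_nonsing_inv _ hSu,
      Matrix.one_mul, Matrix.mul_assoc, Matrix.nonsing_inv_mul _ hSu, Matrix.mul_one]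
  -- det C = det B / det A
  have hdetC : C.det = B.det / A.det := by
    rw [hCdef, det_mul, det_mul, det_nonsing_inv, ← hSS, det_mul]
    field_simp
    rw [← mul_pow, Ring.inverse_mul_cancel _ hSu, one_pow]
  -- det (1 + C) = ∏ (1 + eigenvalues)
  set lam := hCH.eigenvalues with hlam
  have hlam_nonneg : ∀ i, 0 ≤ lam i := fun i => hCpsd.eigenvalues_nonneg i
  have hdet1C : (1 + C).det = ∏ i, (1 + lam i) := by
    have hspec := hCH.spectral_theorem
    rw [← hlam, Unitary.conjStarAlgAut_apply] at hspec
    set U := (hCH.eigenvectorUnitary : Matrix (Fin n) (Fin n) ℝ) with hU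
    have hUU : U * star U = 1 := (Matrix.mem_unitaryGroup_iff).mp hCH.eigenvectorUnitary.2
    have h1C : 1 + C = U * (1 + diagonal (RCLike.ofReal ∘ lam)) * star U := by
      rw [mul_add, add_mul, mul_one, hUU, ← hspec]
    rw [h1C, det_mul, det_mul, mul_comm, ← mul_assoc, mul_comm (det (star U)), ← det_mul, hUU,
      det_one, one_mul]
    rw [← Matrix.diagonal_one, diagonal_add, det_diagonal]
    simp [RCLike.ofReal]
  have hdetABeq : (A + B).det = A.det * ∏ i, (1 + lam i) := by
    rw [hAB, det_mul, det_mul, ← hdet1C, ← hSS, det_mul]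
    ring
  have hprodlam : (∏ i, lam i) = B.det / A.det := by
    have := hCH.det_eq_prod_eigenvalues
    rw [hdetC] at this
    exact_mod_cast this.symm
  have key := scalar_key n hn lam hlam_nonneg
  have hP : (0:ℝ) ≤ ∏ i, (1 + lam i) :=
    Finset.prod_nonneg fun i _ => by linarith [hlam_nonneg i]
  calc A.det ^ ((n:ℝ)⁻¹) + B.det ^ ((n:ℝ)⁻¹)
      = A.det ^ ((n:ℝ)⁻¹) * (1 + (∏ i, lam i) ^ ((n:ℝ)⁻¹)) := by
        rw [mul_add, mul_one, hprodlam, Real.div_rpow hdetB.le hdetA.le,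
          mul_div_cancel₀ _ (ne_of_gt (Real.rpow_pos_of_pos hdetA _))]
    _ ≤ A.det ^ ((n:ℝ)⁻¹) * (∏ i, (1 + lam i)) ^ ((n:ℝ)⁻¹) := by
        exact mul_le_mul_of_nonneg_left key (Real.rpow_pos_of_pos hdetA _).le
    _ = (A + B).det ^ ((n:ℝ)⁻¹) := by
        rw [hdetABeq, Real.mul_rpow hdetA.le hP]


theorem minkowski_det_inequality (n : ℕ) (hn : 1 ≤ n)
    (A B : Matrix (Fin n) (Fin n) ℝ) (hA : A.PosDef) (hB : B.PosDef) :
    A.det ^ ((n : ℝ)⁻¹) + B.det ^ ((n : ℝ)⁻¹) ≤ (A + B).det ^ ((n : ℝ)⁻¹) := by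
  exact mdi_aux n hn A B hA hB
end
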